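/- Let d be the distance function to a nonempty closed set Z ⊆ ℝⁿ. If d is differentiable at q ∉ Z, then q has a unique nearest point in Z. -/

import Mathlib

open Metric Set

/-- Directional derivative of the distance function along a nearest point. -/
lemma key_dir {n : ℕ} (Z : Set (EuclideanSpace ℝ (Fin n)))
    (q : EuclideanSpace ℝ (Fin n))
    (hdiff : DifferentiableAt ℝ (fun x => Metric.infDist x Z) q)
    (p : EuclideanSpace ℝ (Fin n)) (hp : p ∈ Z) (hd : ‖q - p‖ = Metric.infDist q Z) :
    fderiv ℝ (fun x => Metric.infDist x Z) q (p - q) = -‖q - p‖ := by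
  set u : EuclideanSpace ℝ (Fin n) := p - q with hu
  set g : ℝ → ℝ := fun t => Metric.infDist (q + t • u) Z with hg
  have hline : HasDerivAt (fun t : ℝ => q + t • u) u 0 := by
    simpa using ((hasDerivAt_id (0:ℝ)).smul_const u).const_add q
  have hF : HasFDerivAt (fun x => Metric.infDist x Z)
      (fderiv ℝ (fun x => Metric.infDist x Z) q) (q + (0:ℝ) • u) := by
    simpa using hdiff.hasFDerivAt
  have hgd : HasDerivAt g (fderiv ℝ (fun x => Metric.infDist x Z) q u) 0 :=
    hF.comp_hasDerivAt (f := fun t : ℝ => q + t • u) 0 hline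
  -- g equals the affine function on [0,1]
  have heq : ∀ t ∈ Icc (0:ℝ) 1, g t = ‖q - p‖ - t * ‖q - p‖ := by
    intro t ht
    have h1 : g t ≤ ‖q - p‖ - t * ‖q - p‖ := by
      have hle := Metric.infDist_le_dist_of_mem (x := q + t • u) hp
      have hdist : dist (q + t • u) p = (1 - t) * ‖q - p‖ := by
        have h4 : q + t • u - p = (1 - t) • (q - p) := by
          simp only [hu]; module
        rw [dist_eq_norm, h4, norm_smul, Real.norm_eq_abs,
          abs_of_nonneg (by linarith [ht.2])]
      rw [hdist] at hle
      calc g t ≤ (1 - t) * ‖q - p‖ := hle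
        _ = ‖q - p‖ - t * ‖q - p‖ := by ring
    have h2 : ‖q - p‖ - t * ‖q - p‖ ≤ g t := by
      have hlip := (Metric.lipschitz_infDist_pt Z).dist_le_mul q (q + t • u)
      have hdq : dist q (q + t • u) = t * ‖q - p‖ := by
        have h5 : q - (q + t • u) = t • (q - p) := by simp only [hu]; module
        rw [dist_eq_norm, h5, norm_smul, Real.norm_eq_abs, abs_of_nonneg ht.1]
      have habs : |Metric.infDist q Z - g t| ≤ t * ‖q - p‖ := by
        simpa [Real.dist_eq, hdq] using hlip
      have := abs_le.mp habs
      linarith [this.2, hd.le, hd.ge]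
    linarith
  -- derivative within Icc 0 1 at 0
  have hIcc : UniqueDiffWithinAt ℝ (Icc (0:ℝ) 1) 0 :=
    (uniqueDiffOn_Icc zero_lt_one) 0 ⟨le_rfl, zero_le_one⟩
  have hg1 : HasDerivWithinAt g (fderiv ℝ (fun x => Metric.infDist x Z) q u) (Icc 0 1) 0 :=
    hgd.hasDerivWithinAt
  have hg2 : HasDerivWithinAt g (-‖q - p‖) (Icc 0 1) 0 := by
    have haff : HasDerivWithinAt (fun t : ℝ => ‖q - p‖ - t * ‖q - p‖) (-‖q - p‖) (Icc 0 1) 0 := by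
      simpa using (((hasDerivAt_id (0:ℝ)).mul_const ‖q - p‖).const_sub ‖q - p‖).hasDerivWithinAt
    exact haff.congr heq (by simpa using heq 0 ⟨le_rfl, zero_le_one⟩)
  have e1 := hg1.derivWithin hIcc
  have e2 := hg2.derivWithin hIcc
  rw [← e1, ← e2]

/-- If the distance function to a nonempty closed set `Z ⊆ ℝⁿ` is differentiable at
`q ∉ Z`, then `q` has a unique nearest point in `Z`. -/
theorem stmt_15 {n : ℕ} (Z : Set (EuclideanSpace ℝ (Fin n))) (hZ : Z.Nonempty)
    (hZc : IsClosed Z) (q : EuclideanSpace ℝ (Fin n)) (hq : q ∉ Z)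
    (hdiff : DifferentiableAt ℝ (fun x => Metric.infDist x Z) q) :
    ∃! p' : EuclideanSpace ℝ (Fin n), p' ∈ Z ∧ ‖q - p'‖ = Metric.infDist q Z := by
  obtain ⟨p, hpZ, hpd⟩ := hZc.exists_infDist_eq_dist hZ q
  have hpd' : ‖q - p‖ = Metric.infDist q Z := by
    rw [hpd, dist_eq_norm]
  refine ⟨p, ⟨hpZ, hpd'⟩, ?_⟩
  rintro p' ⟨hp'Z, hp'd⟩
  set D := Metric.infDist q Z with hD
  have hDpos : 0 < D := by
    rw [hpd]
    exact dist_pos.mpr fun h => hq (h ▸ hpZ)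
  set f' := fderiv ℝ (fun x => Metric.infDist x Z) q with hf'
  have h1 : f' (p' - q) = -D := by rw [← hp'd]; exact key_dir Z q hdiff p' hp'Z hp'd
  have h2 : f' (p - q) = -D := by rw [← hpd']; exact key_dir Z q hdiff p hpZ hpd'
  have hnorm : ‖f'‖ ≤ 1 := by
    have := norm_fderiv_le_of_lipschitz ℝ (f := fun x => Metric.infDist x Z) (x₀ := q)
      (Metric.lipschitz_infDist_pt Z)
    simpa using this
  have hsum : f' ((p' - q) + (p - q)) = -2 * D := by
    rw [map_add, h1, h2]; ring
  have hbound : 2 * D ≤ ‖(p' - q) + (p - q)‖ := by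
    have hle := f'.le_opNorm ((p' - q) + (p - q))
    rw [hsum, Real.norm_eq_abs, abs_of_nonpos (by linarith)] at hle
    nlinarith [norm_nonneg ((p' - q) + (p - q))]
  have hn1 : ‖p' - q‖ = D := by rw [norm_sub_rev]; exact hp'd
  have hn2 : ‖p - q‖ = D := by rw [norm_sub_rev]; exact hpd'
  have hle : ‖(p' - q) - (p - q)‖ ^ 2 ≤ 0 := by
    have hsq : (2 * D) ^ 2 ≤ ‖(p' - q) + (p - q)‖ ^ 2 := by
      nlinarith [hbound, hDpos.le]
    rw [norm_add_sq_real, hn1, hn2] at hsq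
    rw [norm_sub_sq_real, hn1, hn2]
    linarith
  have hzero : ‖(p' - q) - (p - q)‖ ^ 2 = 0 := le_antisymm hle (sq_nonneg _)
  have h0 : (p' - q) - (p - q) = 0 :=
    norm_eq_zero.mp (pow_eq_zero_iff (n := 2) (by norm_num) |>.mp hzero)
  rw [sub_sub_sub_cancel_right] at h0
  exact sub_eq_zero.mp h0
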